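/- Let 1 ≤ ℓ < n and let M = [D | C] be a real ℓ×n matrix in block form, where D = diag(d_1,…,d_ℓ) with every d_k < 0 and C = (c_{k,j}) is an ℓ×(n−ℓ) matrix with all entries c_{k,j} ≥ 0. For j = 1,…,n−ℓ define ν_j := (1 + Σ_{k=1}^ℓ (−c_{k,j}/d_k))^{−1} · (−c_{1,j}/d_1, …, −c_{ℓ,j}/d_ℓ, 0, …, 0, 1, 0, …, 0) ∈ ℝ^n, where the entry 1 is in position ℓ+j. Then P_M := ker(M) ∩ Δ^{n−1} equals the convex hull of {ν_1,…,ν_{n−ℓ}}, and the extreme points of P_M are exactly ν_1,…,ν_{n−ℓ}. -/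

import Mathlib

namespace Stmt2Aux
variable {ℓ n : ℕ}

def K (hℓn : ℓ < n) (k : Fin ℓ) : Fin n := ⟨k, k.isLt.trans hℓn⟩
def J (hℓn : ℓ < n) (j : Fin (n - ℓ)) : Fin n := ⟨ℓ + j, Nat.add_lt_of_lt_sub' j.isLt⟩

noncomputable def S (hℓn : ℓ < n) (M : Matrix (Fin ℓ) (Fin n) ℝ) (j : Fin (n - ℓ)) : ℝ :=
  ∑ k, -(M k (J hℓn j)) / M k (K hℓn k)

lemma sum_split (hℓn : ℓ < n) (f : Fin n → ℝ) :
    ∑ p, f p = (∑ k, f (K hℓn k)) + ∑ j, f (J hℓn j) := by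
  have hn : ℓ + (n - ℓ) = n := by omega
  rw [← (finCongr hn).sum_comp f, Fin.sum_univ_add]
  have h1 : ∀ k : Fin ℓ, (finCongr hn) (Fin.castAdd (n - ℓ) k) = K hℓn k :=
    fun k => Fin.ext (by simp [K])
  have h2 : ∀ j : Fin (n - ℓ), (finCongr hn) (Fin.natAdd ℓ j) = J hℓn j :=
    fun j => Fin.ext (by simp [J])
  simp only [h1, h2]

lemma cancel_aux2 {a y z : ℝ} (ha : a ≠ 0) : (y * a) * (a⁻¹ * z) = y * z := by
  field_simp

lemma cancel_aux {d c y : ℝ} (hd : d ≠ 0) : d * (-c / d * y) = -(c * y) := by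
  field_simp

end Stmt2Aux

open Stmt2Aux

/-- For a real matrix `M = [D | C]` in block form (`D` diagonal with strictly
negative diagonal entries, `C` entrywise nonnegative), `P_M = ker M ∩ Δ^{n-1}` is the convex
hull of the explicit points `ν j`, and its extreme points are exactly the `ν j`. -/
theorem stmt_2 (ℓ n : ℕ) (hℓ : 1 ≤ ℓ) (hℓn : ℓ < n)
    (M : Matrix (Fin ℓ) (Fin n) ℝ)
    (hD : ∀ (i : Fin ℓ) (j : Fin n), (j : ℕ) < ℓ →
      (((j : ℕ) = (i : ℕ) → M i j < 0) ∧ ((j : ℕ) ≠ (i : ℕ) → M i j = 0)))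
    (hC : ∀ (i : Fin ℓ) (j : Fin n), ℓ ≤ (j : ℕ) → 0 ≤ M i j)
    (ν : Fin (n - ℓ) → (Fin n → ℝ))
    (hν : ∀ j : Fin (n - ℓ), ν j = fun p : Fin n =>
      (1 + ∑ k : Fin ℓ,
          -(M k ⟨ℓ + (j : ℕ), by have := j.isLt; omega⟩) /
            M k ⟨(k : ℕ), by have := k.isLt; omega⟩)⁻¹ *
        (if h : (p : ℕ) < ℓ then
            -(M ⟨(p : ℕ), h⟩ ⟨ℓ + (j : ℕ), by have := j.isLt; omega⟩) / M ⟨(p : ℕ), h⟩ p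
          else if (p : ℕ) = ℓ + (j : ℕ) then 1 else 0)) :
    ({x : Fin n → ℝ | ∀ i, ∑ p, M i p * x p = 0} ∩ stdSimplex ℝ (Fin n))
        = convexHull ℝ (Set.range ν) ∧
      Set.extremePoints ℝ
          ({x : Fin n → ℝ | ∀ i, ∑ p, M i p * x p = 0} ∩ stdSimplex ℝ (Fin n))
        = Set.range ν := by
  classical
  set P : Set (Fin n → ℝ) :=
    ({x : Fin n → ℝ | ∀ i, ∑ p, M i p * x p = 0} ∩ stdSimplex ℝ (Fin n)) with hPdef
  have hd : ∀ k : Fin ℓ, M k (K hℓn k) < 0 := fun k => (hD k (K hℓn k) k.isLt).1 rfl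
  have hdne : ∀ k, M k (K hℓn k) ≠ 0 := fun k => (hd k).ne
  have hd0 : ∀ (i k : Fin ℓ), k ≠ i → M i (K hℓn k) = 0 := fun i k h =>
    (hD i (K hℓn k) k.isLt).2 (fun hv => h (Fin.ext hv))
  have hc : ∀ (i : Fin ℓ) (j : Fin (n - ℓ)), 0 ≤ M i (J hℓn j) := fun i j =>
    hC i (J hℓn j) (Nat.le_add_right ℓ j)
  have hs0 : ∀ j, 0 ≤ S hℓn M j := fun j => Finset.sum_nonneg fun k _ =>
    div_nonneg_of_nonpos (neg_nonpos.2 (hc k j)) (hd k).le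
  have hspos : ∀ j, 0 < 1 + S hℓn M j := fun j => by have := hs0 j; linarith
  have hsne : ∀ j, 1 + S hℓn M j ≠ 0 := fun j => (hspos j).ne'
  have hνK : ∀ j k, ν j (K hℓn k)
      = (1 + S hℓn M j)⁻¹ * (-(M k (J hℓn j)) / M k (K hℓn k)) := by
    intro j k
    rw [hν j]
    simp only [S, J, K]
    exact congrArg _ (dif_pos k.isLt)
  have hνJ : ∀ j j', ν j (J hℓn j')
      = (1 + S hℓn M j)⁻¹ * (if j' = j then 1 else 0) := by
    intro j j'
    rw [hν j]
    simp only [S, J, K]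
    refine (congrArg _ (dif_neg (show ¬ (ℓ + (j' : ℕ) < ℓ) by omega))).trans ?_
    congr 1
    simp [Fin.ext_iff, Nat.add_left_cancel_iff]
  have hker : ∀ (x : Fin n → ℝ) (i : Fin ℓ), (∑ p, M i p * x p)
      = M i (K hℓn i) * x (K hℓn i) + ∑ j, M i (J hℓn j) * x (J hℓn j) := by
    intro x i
    rw [sum_split hℓn (fun p => M i p * x p)]
    congr 1
    exact Finset.sum_eq_single i (fun k _ hk => by rw [hd0 i k hk, zero_mul]) (by simp)
  have hmemP : ∀ x : Fin n → ℝ, x ∈ P ↔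
      (∀ i, M i (K hℓn i) * x (K hℓn i) + ∑ j, M i (J hℓn j) * x (J hℓn j) = 0)
      ∧ (∀ p, 0 ≤ x p) ∧ (∑ p, x p = 1) := by
    intro x
    rw [hPdef]
    simp only [Set.mem_inter_iff, Set.mem_setOf_eq, stdSimplex, and_assoc]
    constructor
    · rintro ⟨h1, h2, h3⟩; exact ⟨fun i => by rw [← hker x i]; exact h1 i, h2, h3⟩
    · rintro ⟨h1, h2, h3⟩; exact ⟨fun i => by rw [hker x i]; exact h1 i, h2, h3⟩
  have hsumJ : ∀ j, ∑ j', ν j (J hℓn j') = (1 + S hℓn M j)⁻¹ := by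
    intro j
    have : ∀ j', ν j (J hℓn j') = if j' = j then (1 + S hℓn M j)⁻¹ else 0 := by
      intro j'
      rw [hνJ j j']
      split_ifs <;> simp
    rw [Finset.sum_congr rfl fun j' _ => this j']
    simp
  have hνmem : ∀ j, ν j ∈ P := by
    intro j
    rw [hmemP]
    refine ⟨?_, ?_, ?_⟩
    · intro i
      have h2 : ∑ j', M i (J hℓn j') * ν j (J hℓn j')
          = M i (J hℓn j) * (1 + S hℓn M j)⁻¹ := by
        have : ∀ j', M i (J hℓn j') * ν j (J hℓn j')
            = if j' = j then M i (J hℓn j') * (1 + S hℓn M j)⁻¹ else 0 := by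
          intro j'
          rw [hνJ j j']
          split_ifs <;> simp
        rw [Finset.sum_congr rfl fun j' _ => this j']
        simp
      have e1 : M i (K hℓn i) * ((1 + S hℓn M j)⁻¹ * (-M i (J hℓn j) / M i (K hℓn i)))
          = -(M i (J hℓn j) * (1 + S hℓn M j)⁻¹) := by
        rw [mul_comm ((1 + S hℓn M j)⁻¹), cancel_aux (hdne i)]
      rw [hνK j i, h2, e1]
      ring
    · intro p
      rw [hν j]
      dsimp only
      refine mul_nonneg (inv_nonneg.2 (hspos j).le) ?_
      split_ifs with h h2
      · have hp : p = K hℓn ⟨(p : ℕ), h⟩ := Fin.ext rfl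
        refine div_nonneg_of_nonpos (neg_nonpos.2 ?_) ?_
        · exact hC _ _ (Nat.le_add_right ℓ j)
        · exact (hd ⟨(p : ℕ), h⟩).le
      · exact zero_le_one
      · exact le_refl 0
    · rw [sum_split hℓn (ν j)]
      have h1 : ∑ k, ν j (K hℓn k) = (1 + S hℓn M j)⁻¹ * S hℓn M j := by
        rw [Finset.sum_congr rfl fun k _ => hνK j k, ← Finset.mul_sum]
        rfl
      rw [h1, hsumJ j]
      have : (1 + S hℓn M j)⁻¹ * S hℓn M j + (1 + S hℓn M j)⁻¹
          = (1 + S hℓn M j)⁻¹ * (1 + S hℓn M j) := by ring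
      rw [this, inv_mul_cancel₀ (hsne j)]
  have hxK : ∀ x ∈ P, ∀ k, x (K hℓn k)
      = ∑ j, (-(M k (J hℓn j)) / M k (K hℓn k)) * x (J hℓn j) := by
    intro x hx k
    have h := ((hmemP x).1 hx).1 k
    apply mul_left_cancel₀ (hdne k)
    rw [Finset.mul_sum]
    rw [Finset.sum_congr rfl fun j _ => cancel_aux (hdne k), Finset.sum_neg_distrib]
    linarith [h]
  have hw1 : ∀ x ∈ P, ∑ j, x (J hℓn j) * (1 + S hℓn M j) = 1 := by
    intro x hx
    have hsum1 := ((hmemP x).1 hx).2.2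
    rw [sum_split hℓn x] at hsum1
    have step : ∀ j, x (J hℓn j) * (1 + S hℓn M j)
        = x (J hℓn j) + ∑ k, (-(M k (J hℓn j)) / M k (K hℓn k)) * x (J hℓn j) := by
      intro j
      rw [mul_add, mul_one, S, Finset.mul_sum]
      congr 1
      exact Finset.sum_congr rfl fun k _ => mul_comm _ _
    rw [Finset.sum_congr rfl fun j _ => step j, Finset.sum_add_distrib, Finset.sum_comm,
      ← Finset.sum_congr rfl fun k (_ : k ∈ Finset.univ) => hxK x hx k]
    linarith [hsum1]
  have hrep : ∀ x ∈ P, x = ∑ j, (x (J hℓn j) * (1 + S hℓn M j)) • ν j := by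
    intro x hx
    have hcK : ∀ k, (∑ j, (x (J hℓn j) * (1 + S hℓn M j)) • ν j) (K hℓn k) = x (K hℓn k) := by
      intro k
      rw [Finset.sum_apply, hxK x hx k]
      refine Finset.sum_congr rfl fun j _ => ?_
      rw [Pi.smul_apply, smul_eq_mul, hνK j k, cancel_aux2 (hsne j)]
      ring
    have hcJ : ∀ j', (∑ j, (x (J hℓn j) * (1 + S hℓn M j)) • ν j) (J hℓn j') = x (J hℓn j') := by
      intro j'
      rw [Finset.sum_apply]
      have e : ∀ j, ((x (J hℓn j) * (1 + S hℓn M j)) • ν j) (J hℓn j')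
          = if j' = j then x (J hℓn j) else 0 := by
        intro j
        rw [Pi.smul_apply, smul_eq_mul, hνJ j j']
        split_ifs with h
        · rw [mul_one, mul_assoc, mul_inv_cancel₀ (hsne j), mul_one]
        · rw [mul_zero, mul_zero]
      rw [Finset.sum_congr rfl fun j _ => e j, Finset.sum_ite_eq]
      simp
    funext p
    by_cases h : (p : ℕ) < ℓ
    · exact (hcK ⟨(p : ℕ), h⟩).symm
    · have hp : p = J hℓn ⟨(p : ℕ) - ℓ, by have := p.isLt; omega⟩ := Fin.ext (by simp [J]; omega)
      rw [hp]
      exact (hcJ _).symm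
  have huniq : ∀ x ∈ P, ∀ j, (∀ j', j' ≠ j → x (J hℓn j') = 0) → x = ν j := by
    intro x hx j h0
    have hwj : x (J hℓn j) * (1 + S hℓn M j) = 1 := by
      have h := Finset.sum_eq_single (s := Finset.univ)
        (f := fun j' => x (J hℓn j') * (1 + S hℓn M j')) j
        (fun j' _ hj' => by simp [h0 j' hj']) (by simp)
      rw [hw1 x hx] at h
      exact h.symm
    calc x = ∑ j', (x (J hℓn j') * (1 + S hℓn M j')) • ν j' := hrep x hx
    _ = ν j := by
        have hz : ∀ j', j' ≠ j → (x (J hℓn j') * (1 + S hℓn M j')) • ν j' = (0 : Fin n → ℝ) :=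
          fun j' hj' => by rw [h0 j' hj', zero_mul, zero_smul]
        rw [Fintype.sum_eq_single j hz, hwj, one_smul]
  have hPhull : P = convexHull ℝ (Set.range ν) := by
    apply Set.Subset.antisymm
    · intro x hx
      have h := Finset.centerMass_mem_convexHull (t := Finset.univ)
        (w := fun j => x (J hℓn j) * (1 + S hℓn M j)) (z := ν) (s := Set.range ν)
        (fun j _ => mul_nonneg (((hmemP x).1 hx).2.1 _) (hspos j).le)
        (by rw [hw1 x hx]; exact one_pos) (fun j _ => Set.mem_range_self j)
      rwa [Finset.centerMass_eq_of_sum_1 _ _ (hw1 x hx), ← hrep x hx] at h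
    · apply convexHull_min
      · rintro y ⟨j, rfl⟩; exact hνmem j
      · apply Convex.inter ?_ (convex_stdSimplex ℝ (Fin n))
        intro x hx y hy a b ha hb hab
        simp only [Set.mem_setOf_eq] at hx hy ⊢
        intro i
        have e : ∀ p, M i p * (a • x + b • y) p = a * (M i p * x p) + b * (M i p * y p) := by
          intro p
          simp only [Pi.add_apply, Pi.smul_apply, smul_eq_mul]
          ring
        rw [Finset.sum_congr rfl fun p _ => e p, Finset.sum_add_distrib,
          ← Finset.mul_sum, ← Finset.mul_sum, hx i, hy i]
        ring
  refine ⟨hPhull, ?_⟩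
  apply Set.Subset.antisymm
  · rw [hPhull]; exact extremePoints_convexHull_subset
  · rintro x ⟨j, rfl⟩
    rw [mem_extremePoints]
    refine ⟨hνmem j, ?_⟩
    intro x₁ h₁ x₂ h₂ hseg
    obtain ⟨t₁, t₂, ht₁, ht₂, hts, heq⟩ := hseg
    have hz : ∀ j', j' ≠ j → x₁ (J hℓn j') = 0 ∧ x₂ (J hℓn j') = 0 := by
      intro j' hj'
      have hco := congrFun heq (J hℓn j')
      rw [hνJ j j', if_neg hj', mul_zero] at hco
      simp only [Pi.add_apply, Pi.smul_apply, smul_eq_mul] at hco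
      have h1n : 0 ≤ x₁ (J hℓn j') := ((hmemP x₁).1 h₁).2.1 _
      have h2n : 0 ≤ x₂ (J hℓn j') := ((hmemP x₂).1 h₂).2.1 _
      constructor <;> nlinarith [mul_nonneg ht₁.le h1n, mul_nonneg ht₂.le h2n]
    exact ⟨huniq x₁ h₁ j (fun j' hj' => (hz j' hj').1),
      huniq x₂ h₂ j (fun j' hj' => (hz j' hj').2)⟩
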